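/- Let m : ℝ → ℝ be smooth, γ ∈ ℝ with γ ≠ 0, ε ∈ {1, −1}, and define b(y) = ε·(γ + m′(y)/γ) and c(y) = −γ + m′(y)/γ. Then for every smooth function q : ℝ → ℝ, the function Q(t,x) = exp(γx)·q(x − εt) satisfies ∂ₜ²Q − ∂ₓ²Q − b(y)·∂ₜQ − c(y)·∂ₓQ + m′(y)·Q = 0 for all (t,x) ∈ ℝ² and all y ∈ ℝ. In particular, for every smooth solution u of the wave equation F[u] = 0, the function Q is an adjoint-symmetry along u, i.e., L*[u]Q = 0. -/

import Mathlib

noncomputable section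

open Real

/-- Partial derivative in the first (time) variable. -/
def Dt (u : ℝ → ℝ → ℝ) : ℝ → ℝ → ℝ := fun t x => deriv (fun s => u s x) t

/-- Partial derivative in the second (space) variable. -/
def Dx (u : ℝ → ℝ → ℝ) : ℝ → ℝ → ℝ := fun t x => deriv (fun s => u t s) x

/-- Smoothness (C^∞) of a function of two real variables. -/
def Smooth2 (u : ℝ → ℝ → ℝ) : Prop := ContDiff ℝ (⊤ : ℕ∞) (fun p : ℝ × ℝ => u p.1 p.2)
/-- The semilinear wave operator F[u] = ∂ₜ²u − ∂ₓ²u + b(u)∂ₜu + c(u)∂ₓu + m(u). -/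
def Fop (b c m : ℝ → ℝ) (u : ℝ → ℝ → ℝ) : ℝ → ℝ → ℝ := fun t x =>
  Dt (Dt u) t x - Dx (Dx u) t x + b (u t x) * Dt u t x + c (u t x) * Dx u t x + m (u t x)

/-- The adjoint linearized operator along u:
L*[u]q = ∂ₜ²q − ∂ₓ²q − b(u)∂ₜq − c(u)∂ₓq + m′(u)q. -/
def Lstar (b c m : ℝ → ℝ) (u q : ℝ → ℝ → ℝ) : ℝ → ℝ → ℝ := fun t x =>
  Dt (Dt q) t x - Dx (Dx q) t x - b (u t x) * Dt q t x - c (u t x) * Dx q t x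
    + deriv m (u t x) * q t x

lemma Dt_exp_mul (γ ε : ℝ) (q : ℝ → ℝ) (hq : Differentiable ℝ q) (t x : ℝ) :
    deriv (fun s => Real.exp (γ * x) * q (x - ε * s)) t
      = Real.exp (γ * x) * (-ε * deriv q (x - ε * t)) := by
  have h1 : HasDerivAt (fun s : ℝ => x - ε * s) (-ε) t := by
    have := ((hasDerivAt_id' t).const_mul ε).const_sub x
    rwa [mul_one] at this
  have h2 : HasDerivAt (fun s : ℝ => q (x - ε * s)) (deriv q (x - ε * t) * (-ε)) t :=
    (hq (x - ε * t)).hasDerivAt.comp t h1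
  have := (h2.const_mul (Real.exp (γ * x))).deriv
  rw [this]; ring

lemma hasDerivAt_exp_q (γ t0 : ℝ) (q : ℝ → ℝ) (hq : Differentiable ℝ q) (x : ℝ) :
    HasDerivAt (fun s => Real.exp (γ * s) * q (s - t0))
      (γ * Real.exp (γ * x) * q (x - t0) + Real.exp (γ * x) * deriv q (x - t0)) x := by
  have h1 : HasDerivAt (fun s : ℝ => Real.exp (γ * s)) (γ * Real.exp (γ * x)) x := by
    have := ((hasDerivAt_id' x).const_mul γ).exp
    convert this using 1; ring
  have h2 : HasDerivAt (fun s : ℝ => q (s - t0)) (deriv q (x - t0)) x := by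
    have h3 : HasDerivAt (fun s : ℝ => s - t0) 1 x := by
      simpa using (hasDerivAt_id x).sub_const t0
    have := (hq (x - t0)).hasDerivAt.comp x h3
    rw [mul_one] at this
    exact this
  exact h1.mul h2

/-- The function Q(t,x) = exp(γx)·q(x − εt) is an adjoint-symmetry of the
semilinear wave equation with b = ε(γ + m′/γ), c = −γ + m′/γ. -/
theorem stmt_4
    (m : ℝ → ℝ) (hm : ContDiff ℝ (⊤ : ℕ∞) m)
    (γ ε : ℝ) (hγ : γ ≠ 0) (hε : ε = 1 ∨ ε = -1)
    (b c : ℝ → ℝ)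
    (hbdef : ∀ y, b y = ε * (γ + deriv m y / γ))
    (hcdef : ∀ y, c y = -γ + deriv m y / γ)
    (q : ℝ → ℝ) (hq : ContDiff ℝ (⊤ : ℕ∞) q)
    (Q : ℝ → ℝ → ℝ) (hQdef : ∀ t x, Q t x = Real.exp (γ * x) * q (x - ε * t)) :
    (∀ t x y : ℝ,
      Dt (Dt Q) t x - Dx (Dx Q) t x - b y * Dt Q t x - c y * Dx Q t x
        + deriv m y * Q t x = 0)
    ∧ (∀ u : ℝ → ℝ → ℝ, Smooth2 u → (∀ t x, Fop b c m u t x = 0) →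
        ∀ t x, Lstar b c m u Q t x = 0) := by
  have hqd : Differentiable ℝ q := hq.differentiable (by simp)
  have hq' : ContDiff ℝ (⊤ : ℕ∞) (deriv q) := (contDiff_infty_iff_deriv.mp hq).2
  have hq'd : Differentiable ℝ (deriv q) := hq'.differentiable (by simp)
  have hDt1 : Dt Q = fun t x => Real.exp (γ * x) * (-ε * deriv q (x - ε * t)) := by
    funext t x
    simp only [Dt, hQdef]
    exact Dt_exp_mul γ ε q hqd t x
  have hDt2 : ∀ t x, Dt (Dt Q) t x
      = Real.exp (γ * x) * (ε * ε * deriv (deriv q) (x - ε * t)) := by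
    intro t x
    have hd : Differentiable ℝ (fun y => -ε * deriv q y) := hq'd.const_mul _
    have h1 : deriv (fun s => Real.exp (γ * x) * (-ε * deriv q (x - ε * s))) t
        = Real.exp (γ * x) * (-ε * deriv (fun y => -ε * deriv q y) (x - ε * t)) :=
      Dt_exp_mul γ ε (fun y => -ε * deriv q y) hd t x
    have h2 : deriv (fun y => -ε * deriv q y) (x - ε * t)
        = -ε * deriv (deriv q) (x - ε * t) := by
      rw [deriv_const_mul _ (hq'd _)]
    show deriv (fun s => Dt Q s x) t = _
    simp only [hDt1]
    rw [h1, h2]; ring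
  have hDx1 : ∀ t x, Dx Q t x
      = γ * Real.exp (γ * x) * q (x - ε * t) + Real.exp (γ * x) * deriv q (x - ε * t) := by
    intro t x
    simp only [Dx, hQdef]
    exact (hasDerivAt_exp_q γ (ε * t) q hqd x).deriv
  have hDx2 : ∀ t x, Dx (Dx Q) t x
      = γ * γ * Real.exp (γ * x) * q (x - ε * t)
        + 2 * γ * Real.exp (γ * x) * deriv q (x - ε * t)
        + Real.exp (γ * x) * deriv (deriv q) (x - ε * t) := by
    intro t x
    have heq : (fun s => Dx Q t s)
        = fun s => γ * (Real.exp (γ * s) * q (s - ε * t))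
            + Real.exp (γ * s) * deriv q (s - ε * t) := by
      funext s
      rw [hDx1 t s]; ring
    have h1 := ((hasDerivAt_exp_q γ (ε * t) q hqd x).const_mul γ).add
      (hasDerivAt_exp_q γ (ε * t) (deriv q) hq'd x)
    show deriv (fun s => Dx Q t s) x = _
    rw [heq]; refine h1.deriv.trans ?_; ring
  have key : ∀ t x y : ℝ,
      Dt (Dt Q) t x - Dx (Dx Q) t x - b y * Dt Q t x - c y * Dx Q t x
        + deriv m y * Q t x = 0 := by
    intro t x y
    rw [hDt2, hDx2, hDt1, hDx1, hQdef, hbdef, hcdef]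
    rcases hε with rfl | rfl <;> (field_simp; ring)
  refine ⟨key, fun u _ _ t x => ?_⟩
  simpa only [Lstar] using key t x (u t x)
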